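/- Let m, α ∈ ℂ and let P be a polynomial of degree d with P(0) ≠ 0 satisfying the associated Laguerre-type equation z P''(z) + 2(α + m z) P'(z) = 2 m d · P(z). Define V(z) = m + α/z + P'(z)/P(z). Then for all z with z ≠ 0 and P(z) ≠ 0, V(z)² + V'(z) = m² + α(α−1)/z² + 2m(α+d)/z. -/

import Mathlib

/-- If P is a polynomial of degree d with P(0) ≠ 0 satisfying
zP'' + 2(α+mz)P' = 2md·P, then the potential V = m + α/z + P'/P satisfies
V² + V' = m² + α(α−1)/z² + 2m(α+d)/z away from z = 0 and the roots of P. -/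
theorem riccati_whittaker_reduction (m α : ℂ) (d : ℕ) (P : Polynomial ℂ)
    (hd : P.natDegree = d) (hP0 : P.eval 0 ≠ 0)
    (hODE : ∀ z : ℂ,
      z * (P.derivative.derivative).eval z + 2 * (α + m * z) * P.derivative.eval z
        = 2 * m * d * P.eval z)
    (V : ℂ → ℂ)
    (hV : ∀ z : ℂ, z ≠ 0 → P.eval z ≠ 0 →
      V z = m + α / z + P.derivative.eval z / P.eval z) :
    ∀ z : ℂ, z ≠ 0 → P.eval z ≠ 0 →
      V z ^ 2 + deriv V z = m ^ 2 + α * (α - 1) / z ^ 2 + 2 * m * (α + d) / z := by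
  intro z hz hPz
  have hopen : IsOpen {w : ℂ | w ≠ 0 ∧ P.eval w ≠ 0} := by
    have h1 : IsOpen {w : ℂ | w ≠ 0} := isOpen_ne
    have h2 : IsOpen {w : ℂ | P.eval w ≠ 0} :=
      isOpen_ne.preimage P.continuous
    exact h1.inter h2
  have hEq : V =ᶠ[nhds z]
      (fun w => m + α / w + P.derivative.eval w / P.eval w) := by
    filter_upwards [hopen.mem_nhds ⟨hz, hPz⟩] with w hw
    exact hV w hw.1 hw.2
  have hf : HasDerivAt (fun w => m + α / w + P.derivative.eval w / P.eval w)
      ((0 * z - α * 1) / z ^ 2 +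
        (P.derivative.derivative.eval z * P.eval z -
          P.derivative.eval z * P.derivative.eval z) / P.eval z ^ 2) z := by
    have hα : HasDerivAt (fun w : ℂ => α / w) ((0 * z - α * 1) / z ^ 2) z :=
      (hasDerivAt_const z α).div (hasDerivAt_id z) hz
    have hr : HasDerivAt (fun w => P.derivative.eval w / P.eval w)
        ((P.derivative.derivative.eval z * P.eval z -
          P.derivative.eval z * P.derivative.eval z) / P.eval z ^ 2) z :=
      (P.derivative.hasDerivAt z).div (P.hasDerivAt z) hPz
    exact (((hasDerivAt_const z m).add hα).add hr).congr_deriv (by ring)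
  have hV' : deriv V z = (0 * z - α * 1) / z ^ 2 +
      (P.derivative.derivative.eval z * P.eval z -
        P.derivative.eval z * P.derivative.eval z) / P.eval z ^ 2 :=
    (hf.congr_of_eventuallyEq hEq).deriv
  rw [hV z hz hPz, hV']
  have h := hODE z
  field_simp
  ring_nf
  ring_nf at h
  linear_combination (z * P.eval z) * h
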